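/- Let (s_n) be positive and regularly varying of index γ > 0, let q be such that Ψ_n(q) → Ψ(q) and κ_n(q) → κ(q) for all q in some left-neighbourhood of b, where Ψ_n(q) := s_n Σ_m p_{n,m}[(m/n)^q − 1] and κ_n(q) := Ψ_n(q) + s_n Σ_{m<n} p_{n,m}(1 − m/n)^q. If (r_n) is any positive sequence regularly varying of index q (q < b, close enough to b), then s_n Σ_{m=1}^{n−1} p_{n,m} [ r_{n−m}/r_n − (1 − m/n)^q ] → 0 as n → ∞, provided Ψ and κ are continuous at q. -/

import Mathlib

open Filter MeasureTheory Pointwise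


lemma slowly_uct (h : ℕ → ℝ)
    (H : ∀ x : ℝ, 0 < x → Tendsto (fun n : ℕ => h ⌊(n : ℝ) * x⌋₊ - h n) atTop (nhds 0))
    {ε : ℝ} (hε : 0 < ε) :
    ∀ᶠ n : ℕ in atTop, ∀ m : ℕ, (n : ℝ) / 4 ≤ m → m ≤ n → |h m - h n| ≤ ε := by
  by_contra hcon
  rw [Filter.not_eventually] at hcon
  have hfreq : ∃ᶠ n : ℕ in atTop, ∃ m : ℕ, (n : ℝ) / 4 ≤ m ∧ m ≤ n ∧ ε < |h m - h n| := by
    apply hcon.mono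
    intro n hn
    push_neg at hn
    obtain ⟨m, h1, h2, h3⟩ := hn
    exact ⟨m, h1, h2, h3⟩
  obtain ⟨φ, hφmono, hφ⟩ := Filter.extraction_of_frequently_atTop hfreq
  choose m hm1 hm2 hm3 using hφ
  have hφtop : Tendsto φ atTop atTop := hφmono.tendsto_atTop
  have hmtop : Tendsto m atTop atTop := by
    rw [tendsto_atTop]
    intro b
    filter_upwards [hφtop.eventually_ge_atTop (4 * b)] with k hk
    have h4 : (φ k : ℝ) ≤ 4 * m k := by
      have := hm1 k
      linarith [(div_le_iff₀ (by norm_num : (0:ℝ) < 4)).mp this]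
    have h5 : (4 * b : ℝ) ≤ 4 * m k := le_trans (by exact_mod_cast hk) h4
    have h6 : (b:ℝ) ≤ m k := by linarith
    exact_mod_cast h6
  -- Egorov setup
  set f : ℕ → ℝ → ℝ := fun k x => h ⌊(φ k : ℝ) * x⌋₊ - h (φ k) with hf
  set g : ℕ → ℝ → ℝ := fun k x => h ⌊(m k : ℝ) * x⌋₊ - h (m k) with hg
  have hfmeas : ∀ k, StronglyMeasurable (f k) := by
    intro k
    exact ((measurable_from_top.comp (Nat.measurable_floor.comp
      (measurable_const.mul measurable_id))).sub measurable_const).stronglyMeasurable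
  have hgmeas : ∀ k, StronglyMeasurable (g k) := by
    intro k
    exact ((measurable_from_top.comp (Nat.measurable_floor.comp
      (measurable_const.mul measurable_id))).sub measurable_const).stronglyMeasurable
  have hfpt : ∀ x : ℝ, (1/4 : ℝ) ≤ x → Tendsto (fun k => f k x) atTop (nhds 0) := by
    intro x hx
    exact (H x (by linarith)).comp hφtop
  have hgpt : ∀ x : ℝ, (1/4 : ℝ) ≤ x → Tendsto (fun k => g k x) atTop (nhds 0) := by
    intro x hx
    exact (H x (by linarith)).comp hmtop
  obtain ⟨t₁, ht₁s, ht₁m, ht₁μ, hU₁⟩ := tendstoUniformlyOn_of_ae_tendsto (μ := volume)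
    (f := f) (g := fun _ => (0:ℝ)) hfmeas stronglyMeasurable_const
    (measurableSet_Icc (a := (1/4:ℝ)) (b := 2)) (IsCompact.measure_lt_top isCompact_Icc).ne
    (Filter.Eventually.of_forall (fun x hx => hfpt x hx.1))
    (show (0:ℝ) < 1/8 by norm_num)
  obtain ⟨t₂, ht₂s, ht₂m, ht₂μ, hU₂⟩ := tendstoUniformlyOn_of_ae_tendsto (μ := volume)
    (f := g) (g := fun _ => (0:ℝ)) hgmeas stronglyMeasurable_const
    (measurableSet_Icc (a := (1:ℝ)) (b := 2)) (IsCompact.measure_lt_top isCompact_Icc).ne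
    (Filter.Eventually.of_forall (fun x hx => hgpt x (by linarith [hx.1])))
    (show (0:ℝ) < 1/8 by norm_num)
  set E := Set.Icc (1/4:ℝ) 2 \ t₁ with hE
  set F := Set.Icc (1:ℝ) 2 \ t₂ with hF
  -- uniform smallness
  rw [Metric.tendstoUniformlyOn_iff] at hU₁ hU₂
  have hU := ((hU₁ (ε/2) (by linarith)).and (hU₂ (ε/2) (by linarith))).and
    (eventually_ge_atTop 1)
  obtain ⟨k, ⟨⟨hk1, hk2⟩, hk3⟩⟩ := hU.exists
  have hφk1 : 1 ≤ φ k := le_trans hk3 (hφmono.le_apply)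
  have hφkpos : (0:ℝ) < φ k := by exact_mod_cast hφk1
  set x : ℝ := (m k : ℝ) / (φ k) with hx
  have hx14 : (1/4 : ℝ) ≤ x := by
    rw [hx, le_div_iff₀ hφkpos]
    have := hm1 k
    linarith
  have hx1 : x ≤ 1 := by
    rw [hx, div_le_one hφkpos]
    exact_mod_cast hm2 k
  -- nonempty intersection of E and x • F
  have hD : ∃ z, z ∈ E ∧ z ∈ x • F := by
    by_contra hemp
    push_neg at hemp
    have hdisj : Disjoint E (x • F) := Set.disjoint_left.mpr hemp
    have hEmeas : MeasurableSet E := (measurableSet_Icc).diff ht₁m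
    have hsub : E ∪ x • F ⊆ Set.Icc (1/4:ℝ) 2 := by
      apply Set.union_subset
      · exact Set.diff_subset
      · rintro z ⟨y, hy, rfl⟩
        have hy' : y ∈ Set.Icc (1:ℝ) 2 := hy.1
        constructor
        · simp only [smul_eq_mul]
          nlinarith [hy'.1, hy'.2]
        · simp only [smul_eq_mul]
          nlinarith [hy'.1, hy'.2]
    have hμE : ENNReal.ofReal (13/8) ≤ volume E := by
      have h1 : volume (Set.Icc (1/4:ℝ) 2) - volume t₁ ≤ volume E := le_measure_diff
      have h2 : volume (Set.Icc (1/4:ℝ) 2) = ENNReal.ofReal (7/4) := by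
        rw [Real.volume_Icc]; norm_num
      calc ENNReal.ofReal (13/8) = ENNReal.ofReal (7/4) - ENNReal.ofReal (1/8) := by
            rw [← ENNReal.ofReal_sub _ (by norm_num)]; norm_num
        _ ≤ volume (Set.Icc (1/4:ℝ) 2) - volume t₁ := by
            rw [h2]; exact tsub_le_tsub le_rfl ht₁μ
        _ ≤ volume E := h1
    have hμF : ENNReal.ofReal (7/8) ≤ volume F := by
      have h1 : volume (Set.Icc (1:ℝ) 2) - volume t₂ ≤ volume F := le_measure_diff
      have h2 : volume (Set.Icc (1:ℝ) 2) = ENNReal.ofReal 1 := by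
        rw [Real.volume_Icc]; norm_num
      calc ENNReal.ofReal (7/8) = ENNReal.ofReal 1 - ENNReal.ofReal (1/8) := by
            rw [← ENNReal.ofReal_sub _ (by norm_num)]; norm_num
        _ ≤ volume (Set.Icc (1:ℝ) 2) - volume t₂ := by
            rw [h2]; exact tsub_le_tsub le_rfl ht₂μ
        _ ≤ volume F := h1
    have hμD : ENNReal.ofReal (7/32) ≤ volume (x • F) := by
      rw [Measure.addHaar_smul_of_nonneg volume (by linarith : (0:ℝ) ≤ x) F]
      simp only [Module.finrank_self, pow_one]
      calc ENNReal.ofReal (7/32) = ENNReal.ofReal (1/4) * ENNReal.ofReal (7/8) := by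
            rw [← ENNReal.ofReal_mul (by norm_num)]; norm_num
        _ ≤ ENNReal.ofReal x * volume F :=
            mul_le_mul' (ENNReal.ofReal_le_ofReal hx14) hμF
    have hlt : volume (E ∪ x • F) ≤ ENNReal.ofReal (7/4) := by
      calc volume (E ∪ x • F) ≤ volume (Set.Icc (1/4:ℝ) 2) := measure_mono hsub
        _ = ENNReal.ofReal (7/4) := by rw [Real.volume_Icc]; norm_num
    rw [measure_union' hdisj hEmeas] at hlt
    have : ENNReal.ofReal (13/8) + ENNReal.ofReal (7/32) ≤ ENNReal.ofReal (7/4) :=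
      le_trans (add_le_add hμE hμD) hlt
    rw [← ENNReal.ofReal_add (by norm_num) (by norm_num),
      ENNReal.ofReal_le_ofReal_iff (by norm_num)] at this
    norm_num at this
  obtain ⟨z, hzE, hzD⟩ := hD
  obtain ⟨y, hyF, rfl⟩ := hzD
  -- key identity
  have hkey : (φ k : ℝ) * (x • y) = (m k : ℝ) * y := by
    simp only [smul_eq_mul, hx]
    field_simp
  have h1 : dist ((fun _ => (0:ℝ)) (x • y)) (f k (x • y)) < ε/2 := hk1 (x • y) hzE
  have h2 : dist ((fun _ => (0:ℝ)) y) (g k y) < ε/2 := hk2 y hyF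
  rw [Real.dist_eq] at h1 h2
  simp only [zero_sub, abs_neg] at h1 h2
  have hid : h (m k) - h (φ k) = f k (x • y) - g k y := by
    simp only [hf, hg, hkey]
    ring
  have : |h (m k) - h (φ k)| < ε := by
    rw [hid]
    calc |f k (x • y) - g k y| ≤ |f k (x • y)| + |g k y| := abs_sub _ _
      _ < ε/2 + ε/2 := add_lt_add h1 h2
      _ = ε := by ring
  exact absurd (hm3 k) (not_lt.mpr this.le)


lemma slowly_chain (h : ℕ → ℝ) {ε : ℝ} (hε : 0 ≤ ε) (N₀ : ℕ) (hN₀ : 1 ≤ N₀)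
    (W : ∀ n : ℕ, N₀ ≤ n → ∀ m : ℕ, (n : ℝ) / 4 ≤ m → m ≤ n → |h m - h n| ≤ ε) :
    ∀ n : ℕ, N₀ ≤ n → ∀ m : ℕ, N₀ ≤ m → m ≤ n →
      |h m - h n| ≤ ε * (Real.log ((n : ℝ) / m) / Real.log 2 + 2) := by
  intro n
  induction n using Nat.strong_induction_on with
  | _ n ih =>
    intro hn m hm hmn
    have hm1 : 1 ≤ m := le_trans hN₀ hm
    have hmpos : (0:ℝ) < m := by exact_mod_cast hm1
    have hnpos : (0:ℝ) < n := lt_of_lt_of_le hmpos (by exact_mod_cast hmn)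
    have hlog2 : (0:ℝ) < Real.log 2 := Real.log_pos (by norm_num)
    have hlognm : 0 ≤ Real.log ((n:ℝ)/m) :=
      Real.log_nonneg ((one_le_div hmpos).mpr (by exact_mod_cast hmn))
    by_cases hc : (n:ℝ)/4 ≤ m
    · have h1 := W n hn m hc hmn
      have h2 : 0 ≤ Real.log ((n:ℝ)/m) / Real.log 2 := div_nonneg hlognm hlog2.le
      nlinarith
    · push_neg at hc
      set n' := n / 2 with hn'
      have h4m : 4 * m < n := by
        have : (4 * m : ℝ) < n := by linarith
        exact_mod_cast this
      have hmn' : m ≤ n' := by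
        rw [hn', Nat.le_div_iff_mul_le (by norm_num)]
        omega
      have hn'n : n' < n := Nat.div_lt_self (by omega) (by norm_num)
      have h2n' : 2 * n' ≤ n := by omega
      have hn'1 : 1 ≤ n' := le_trans hm1 hmn'
      have hn'pos : (0:ℝ) < n' := by exact_mod_cast hn'1
      -- step bound
      have hstep : |h n' - h n| ≤ ε := by
        apply W n hn n' _ hn'n.le
        have hne : (n:ℝ) ≤ 2 * n' + 1 := by exact_mod_cast (by omega : n ≤ 2 * n' + 1)
        have h4 : (4:ℝ) ≤ n := by exact_mod_cast (by omega : 4 ≤ n)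
        linarith
      have hIH := ih n' hn'n (le_trans hm hmn') m hm hmn'
      have hchain : |h m - h n| ≤ |h m - h n'| + |h n' - h n| := by
        calc |h m - h n| = |(h m - h n') + (h n' - h n)| := by ring_nf
          _ ≤ |h m - h n'| + |h n' - h n| := abs_add_le _ _
      -- log inequality : log(n'/m) + log 2 ≤ log(n/m)
      have hlogkey : Real.log ((n':ℝ)/m) + Real.log 2 ≤ Real.log ((n:ℝ)/m) := by
        rw [← Real.log_mul (by positivity) (by norm_num)]
        apply Real.log_le_log (by positivity)
        have h2n'R : 2 * (n':ℝ) ≤ n := by exact_mod_cast h2n'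
        rw [div_mul_eq_mul_div]
        have h2n'R : 2 * (n':ℝ) ≤ n := by exact_mod_cast h2n'
        gcongr
        linarith
      have hdiv : Real.log ((n':ℝ)/m) / Real.log 2 + 1 ≤ Real.log ((n:ℝ)/m) / Real.log 2 := by
        rw [div_add_one hlog2.ne', div_le_div_iff₀ hlog2 hlog2]
        nlinarith
      calc |h m - h n| ≤ |h m - h n'| + |h n' - h n| := hchain
        _ ≤ ε * (Real.log ((n':ℝ)/m) / Real.log 2 + 2) + ε := add_le_add hIH hstep
        _ = ε * (Real.log ((n':ℝ)/m) / Real.log 2 + 1 + 2) := by ring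
        _ ≤ ε * (Real.log ((n:ℝ)/m) / Real.log 2 + 2) := by
            apply mul_le_mul_of_nonneg_left _ hε
            linarith


lemma rv_log_aux (r : ℕ → ℝ) (hr : ∀ n, 0 < r n) (q : ℝ)
    (H : ∀ x : ℝ, 0 < x →
      Tendsto (fun n : ℕ => r ⌊(n : ℝ) * x⌋₊ / r n) atTop (nhds (x ^ q))) :
    ∀ x : ℝ, 0 < x → Tendsto
      (fun n : ℕ => (Real.log (r ⌊(n : ℝ) * x⌋₊) - q * Real.log ⌊(n : ℝ) * x⌋₊)
        - (Real.log (r n) - q * Real.log n)) atTop (nhds 0) := by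
  intro x hx
  have hxq : (0:ℝ) < x ^ q := Real.rpow_pos_of_pos hx q
  -- log of ratio tends to q log x
  have h1 : Tendsto (fun n : ℕ => Real.log (r ⌊(n : ℝ) * x⌋₊) - Real.log (r n))
      atTop (nhds (q * Real.log x)) := by
    have hcont : Tendsto (fun n : ℕ => Real.log (r ⌊(n : ℝ) * x⌋₊ / r n)) atTop
        (nhds (Real.log (x ^ q))) :=
      ((Real.continuousAt_log hxq.ne').tendsto).comp (H x hx)
    rw [Real.log_rpow hx] at hcont
    apply hcont.congr
    intro n
    exact Real.log_div (hr _).ne' (hr _).ne'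
  -- floor ratio tends to x
  have h2 : Tendsto (fun n : ℕ => ((⌊(n : ℝ) * x⌋₊ : ℝ)) / n) atTop (nhds x) := by
    have hlb : ∀ᶠ n : ℕ in atTop, x - 1 / n ≤ ((⌊(n : ℝ) * x⌋₊ : ℝ)) / n := by
      filter_upwards [eventually_ge_atTop 1] with n hn
      have hnpos : (0:ℝ) < n := by exact_mod_cast hn
      have := Nat.sub_one_lt_floor ((n:ℝ) * x)
      have hfl : (n:ℝ) * x - 1 ≤ (⌊(n : ℝ) * x⌋₊ : ℝ) := by
        have := Nat.lt_floor_add_one ((n:ℝ) * x)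
        have h0 := Nat.floor_le (by positivity : (0:ℝ) ≤ (n:ℝ) * x)
        linarith [Nat.sub_one_lt_floor ((n:ℝ) * x)]
      rw [le_div_iff₀ hnpos]
      calc (x - 1/n) * n = n * x - 1 := by field_simp
        _ ≤ _ := hfl
    have hub : ∀ᶠ n : ℕ in atTop, ((⌊(n : ℝ) * x⌋₊ : ℝ)) / n ≤ x := by
      filter_upwards [eventually_ge_atTop 1] with n hn
      have hnpos : (0:ℝ) < n := by exact_mod_cast hn
      rw [div_le_iff₀ hnpos]
      calc ((⌊(n : ℝ) * x⌋₊ : ℝ)) ≤ (n:ℝ) * x := Nat.floor_le (by positivity)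
        _ = x * n := by ring
    have hlim : Tendsto (fun n : ℕ => x - 1 / (n:ℝ)) atTop (nhds x) := by
      have : Tendsto (fun n : ℕ => 1 / (n:ℝ)) atTop (nhds 0) := tendsto_one_div_atTop_nhds_zero_nat
      simpa using (tendsto_const_nhds (x := x)).sub this
    exact tendsto_of_tendsto_of_tendsto_of_le_of_le' hlim tendsto_const_nhds hlb hub
  have h3 : Tendsto (fun n : ℕ => Real.log ((⌊(n : ℝ) * x⌋₊ : ℝ)) - Real.log n)
      atTop (nhds (Real.log x)) := by
    have hcont : Tendsto (fun n : ℕ => Real.log (((⌊(n : ℝ) * x⌋₊ : ℝ)) / n)) atTop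
        (nhds (Real.log x)) := ((Real.continuousAt_log hx.ne').tendsto).comp h2
    have hev : ∀ᶠ n : ℕ in atTop, Real.log (((⌊(n : ℝ) * x⌋₊ : ℝ)) / n)
        = Real.log ((⌊(n : ℝ) * x⌋₊ : ℝ)) - Real.log n := by
      have hx1 : ∀ᶠ n : ℕ in atTop, (1:ℝ) ≤ (n:ℝ) * x := by
        have : Tendsto (fun n : ℕ => (n:ℝ) * x) atTop atTop :=
          Tendsto.atTop_mul_const hx tendsto_natCast_atTop_atTop
        exact this.eventually_ge_atTop 1
      filter_upwards [eventually_ge_atTop 1, hx1] with n hn hn1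
      have h1' : 1 ≤ ⌊(n : ℝ) * x⌋₊ := Nat.le_floor (by exact_mod_cast hn1)
      have : (0:ℝ) < (⌊(n : ℝ) * x⌋₊ : ℝ) := by exact_mod_cast h1'
      have hnp : (0:ℝ) < n := by exact_mod_cast hn
      exact Real.log_div this.ne' hnp.ne'
    exact hcont.congr' (hev.mono fun n h => h)
  have := h1.sub (h3.const_mul q)
  simp only [mul_comm] at this
  have h4 : q * Real.log x - q * Real.log x = 0 := by ring
  have := h1.sub (h3.const_mul q)
  rw [show q * Real.log x - q * Real.log x = 0 by ring] at this
  apply this.congr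
  intro n
  ring

lemma potter_bounds (r : ℕ → ℝ) (hr : ∀ n, 0 < r n) (q : ℝ)
    (H : ∀ x : ℝ, 0 < x →
      Tendsto (fun n : ℕ => r ⌊(n : ℝ) * x⌋₊ / r n) atTop (nhds (x ^ q)))
    {δ c : ℝ} (hδ : 0 < δ) (hc : 0 < c) :
    ∃ N : ℕ, 1 ≤ N ∧ ∀ m n : ℕ, N ≤ m → m ≤ n →
      r m / r n ≤ Real.exp c * ((m : ℝ) / n) ^ (q - δ) ∧
      Real.exp (-c) * ((m : ℝ) / n) ^ (q + δ) ≤ r m / r n := by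
  set h : ℕ → ℝ := fun n => Real.log (r n) - q * Real.log n with hh
  have H' : ∀ x : ℝ, 0 < x →
      Tendsto (fun n : ℕ => h ⌊(n : ℝ) * x⌋₊ - h n) atTop (nhds 0) :=
    rv_log_aux r hr q H
  have hlog2 : (0:ℝ) < Real.log 2 := Real.log_pos (by norm_num)
  set ε := min (c/2) (δ * Real.log 2) with hε
  have hεpos : 0 < ε := lt_min (by linarith) (by positivity)
  obtain ⟨N₀, hN₀⟩ := Filter.eventually_atTop.mp (slowly_uct h H' hεpos)
  set N := max N₀ 1 with hN
  refine ⟨N, le_max_right _ _, ?_⟩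
  have hchain := slowly_chain h hεpos.le N (le_max_right _ _)
    (fun n hn => hN₀ n (le_trans (le_max_left _ _) hn))
  intro m n hm hmn
  have hm1 : 1 ≤ m := le_trans (le_max_right _ _) hm
  have hmpos : (0:ℝ) < m := by exact_mod_cast hm1
  have hnpos : (0:ℝ) < n := lt_of_lt_of_le hmpos (by exact_mod_cast hmn)
  have hmn' : (m:ℝ) ≤ n := by exact_mod_cast hmn
  have hlognm : 0 ≤ Real.log ((n:ℝ)/m) := Real.log_nonneg ((one_le_div hmpos).mpr hmn')
  have hbound := hchain n (le_trans hm hmn) m hm hmn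
  have hkey : |h m - h n| ≤ δ * Real.log ((n:ℝ)/m) + c := by
    have h1 : ε * (Real.log ((n:ℝ)/m) / Real.log 2) ≤ δ * Real.log ((n:ℝ)/m) := by
      have hεle : ε ≤ δ * Real.log 2 := min_le_right _ _
      rw [mul_div_assoc']
      rw [div_le_iff₀ hlog2]
      nlinarith
    have h2 : ε * 2 ≤ c := by
      have := min_le_left (c/2) (δ * Real.log 2)
      linarith
    calc |h m - h n| ≤ ε * (Real.log ((n:ℝ)/m) / Real.log 2 + 2) := hbound
      _ = ε * (Real.log ((n:ℝ)/m) / Real.log 2) + ε * 2 := by ring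
      _ ≤ δ * Real.log ((n:ℝ)/m) + c := add_le_add h1 h2
  have hlogratio : Real.log (r m / r n) = (h m - h n) + q * Real.log ((m:ℝ)/n) := by
    rw [Real.log_div (hr m).ne' (hr n).ne', Real.log_div hmpos.ne' hnpos.ne', hh]
    ring
  have hloginv : Real.log ((n:ℝ)/m) = - Real.log ((m:ℝ)/n) := by
    rw [← Real.log_inv, inv_div]
  have habs := abs_le.mp hkey
  constructor
  · have hlr : Real.log (r m / r n) ≤ (q - δ) * Real.log ((m:ℝ)/n) + c := by
      rw [hlogratio]
      have := habs.2
      rw [hloginv] at this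
      linarith
    calc r m / r n = Real.exp (Real.log (r m / r n)) :=
          (Real.exp_log (div_pos (hr m) (hr n))).symm
      _ ≤ Real.exp ((q - δ) * Real.log ((m:ℝ)/n) + c) := Real.exp_le_exp.mpr hlr
      _ = Real.exp c * ((m:ℝ)/n) ^ (q - δ) := by
          rw [Real.exp_add, Real.rpow_def_of_pos (by positivity)]
          ring_nf
  · have hlr : (q + δ) * Real.log ((m:ℝ)/n) + (-c) ≤ Real.log (r m / r n) := by
      rw [hlogratio]
      have := habs.1
      rw [hloginv] at this
      linarith
    calc Real.exp (-c) * ((m:ℝ)/n) ^ (q + δ)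
        = Real.exp ((q + δ) * Real.log ((m:ℝ)/n) + (-c)) := by
          rw [Real.exp_add, Real.rpow_def_of_pos (by positivity)]
          ring_nf
      _ ≤ Real.exp (Real.log (r m / r n)) := Real.exp_le_exp.mpr hlr
      _ = r m / r n := Real.exp_log (div_pos (hr m) (hr n))


set_option maxHeartbeats 2000000 in
theorem regular_variation_replacement
    (s : ℕ → ℝ) (hs : ∀ n, 0 < s n) (γ : ℝ) (hγ : 0 < γ)
    (hsrv : ∀ x : ℝ, 0 < x →
      Tendsto (fun n : ℕ => s ⌊(n : ℝ) * x⌋₊ / s n) atTop (nhds (x ^ γ)))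
    (P : ℕ → ℕ → ℝ) (hPnonneg : ∀ n m, 0 ≤ P n m)
    (hPsum : ∀ n : ℕ, 0 < n → ∑' m : ℕ, P n (m + 1) = 1)
    (b q₀ : ℝ) (hq₀ : q₀ < b)
    (Ψ κ : ℝ → ℝ)
    (hΨ : ∀ q' ∈ Set.Ioo q₀ b, Tendsto
      (fun n : ℕ => s n * ∑' m : ℕ, P n (m + 1) * (((((m : ℝ) + 1)) / n) ^ q' - 1))
      atTop (nhds (Ψ q')))
    (hκ : ∀ q' ∈ Set.Ioo q₀ b, Tendsto
      (fun n : ℕ => s n * ∑' m : ℕ, P n (m + 1) * (((((m : ℝ) + 1)) / n) ^ q' - 1)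
        + s n * ∑ m ∈ Finset.Ico 1 n, P n m * (1 - (m : ℝ) / n) ^ q')
      atTop (nhds (κ q')))
    (q : ℝ) (hq : q ∈ Set.Ioo q₀ b) (hqpos : 0 < q)
    (hΨcont : ContinuousAt Ψ q) (hκcont : ContinuousAt κ q)
    (r : ℕ → ℝ) (hr : ∀ n, 0 < r n)
    (hrrv : ∀ x : ℝ, 0 < x →
      Tendsto (fun n : ℕ => r ⌊(n : ℝ) * x⌋₊ / r n) atTop (nhds (x ^ q))) :
    Tendsto (fun n : ℕ =>
        s n * ∑ m ∈ Finset.Ico 1 n,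
          P n m * (r (n - m) / r n - (1 - (m : ℝ) / n) ^ q))
      atTop (nhds 0) := by
  obtain ⟨hq₀q, hqb⟩ := hq
  set A : ℝ → ℕ → ℝ :=
    fun q' n => s n * ∑ m ∈ Finset.Ico 1 n, P n m * (1 - (m:ℝ)/n) ^ q' with hAdef
  set g : ℝ → ℝ := fun q' => κ q' - Ψ q' with hgdef
  have hAtend : ∀ q' ∈ Set.Ioo q₀ b, Tendsto (A q') atTop (nhds (g q')) := by
    intro q' hq'
    have := (hκ q' hq').sub (hΨ q' hq')
    simpa using this
  have hAnonneg : ∀ q' (n : ℕ), 0 ≤ A q' n := by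
    intro q' n
    apply mul_nonneg (hs n).le
    apply Finset.sum_nonneg
    intro m hm
    rw [Finset.mem_Ico] at hm
    apply mul_nonneg (hPnonneg n m)
    apply Real.rpow_nonneg
    have hnpos : (0:ℝ) < n := by exact_mod_cast (by omega : 0 < n)
    have hmlt : (m:ℝ) < n := by exact_mod_cast hm.2
    rw [sub_nonneg, div_le_one hnpos]
    linarith
  have hgq0 : 0 ≤ g q := ge_of_tendsto' (hAtend q ⟨hq₀q, hqb⟩) (fun n => hAnonneg q n)
  have hgcont : ContinuousAt g q := hκcont.sub hΨcont
  rw [NormedAddCommGroup.tendsto_nhds_zero]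
  intro ε₀ hε₀
  set ε := min ε₀ 1 with hεdef
  have hε : 0 < ε := lt_min hε₀ one_pos
  have hε1 : ε ≤ 1 := min_le_right _ _
  have hεε₀ : ε ≤ ε₀ := min_le_left _ _
  set G : ℝ := g q + 1 with hGdef
  have hGpos : 0 < G := by linarith
  -- continuity modulus
  obtain ⟨δ₁, hδ₁pos, hδ₁⟩ := Metric.continuousAt_iff.mp hgcont (ε/8) (by positivity)
  set δ := min (δ₁/2) (min ((q - q₀)/2) (min (q/2) ((b - q)/2))) with hδdef
  have hδpos : 0 < δ := by
    apply lt_min (by linarith)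
    exact lt_min (by linarith) (lt_min (by linarith) (by linarith))
  have hδq : δ ≤ q/2 := le_trans (min_le_right _ _) (le_trans (min_le_right _ _) (min_le_left _ _))
  have hδb : δ ≤ (b - q)/2 := le_trans (min_le_right _ _) (le_trans (min_le_right _ _) (min_le_right _ _))
  have hδq₀ : δ ≤ (q - q₀)/2 := le_trans (min_le_right _ _) (min_le_left _ _)
  have hδδ₁ : δ ≤ δ₁/2 := min_le_left _ _
  have hmem1 : q - δ ∈ Set.Ioo q₀ b := ⟨by linarith, by linarith⟩
  have hmem2 : q + δ ∈ Set.Ioo q₀ b := ⟨by linarith, by linarith⟩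
  have hqδpos : 0 < q - δ := by linarith
  have hgud : |g (q - δ) - g q| < ε/8 := by
    have h0 : dist (q - δ) q < δ₁ := by
      rw [Real.dist_eq, abs_of_nonpos (by linarith)]; linarith
    have := hδ₁ h0
    rwa [Real.dist_eq] at this
  have hgld : |g (q + δ) - g q| < ε/8 := by
    have h0 : dist (q + δ) q < δ₁ := by
      rw [Real.dist_eq, abs_of_nonneg (by linarith)]; linarith
    have := hδ₁ h0
    rwa [Real.dist_eq] at this
  -- the multiplicative constant
  set ε₈ : ℝ := ε / (8 * (G + 1)) with hε₈def
  have hε₈pos : 0 < ε₈ := by positivity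
  set ecst : ℝ := Real.log (1 + ε₈) with hecstdef
  have hecstpos : 0 < ecst := Real.log_pos (by linarith)
  have hexp : Real.exp ecst = 1 + ε₈ := Real.exp_log (by linarith)
  have hexpneg : Real.exp (-ecst) = (1 + ε₈)⁻¹ := by
    rw [Real.exp_neg, hexp]
  -- Potter bounds
  obtain ⟨N₁, hN₁1, hPot₁⟩ := potter_bounds r hr q hrrv hδpos hecstpos
  obtain ⟨N₂, hN₂1, hPot₂⟩ := potter_bounds r hr q hrrv (half_pos hδpos) hecstpos
  have hN₂pos : (0:ℝ) < N₂ := by exact_mod_cast hN₂1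
  -- growth bound
  set c₁ : ℝ := r N₂ * Real.exp (-ecst) * (((N₂:ℝ) ^ (q - δ/2))⁻¹) with hc₁def
  have hc₁pos : 0 < c₁ := by
    apply mul_pos (mul_pos (hr N₂) (Real.exp_pos _))
    exact inv_pos.mpr (Real.rpow_pos_of_pos hN₂pos _)
  have hgrow : ∀ n : ℕ, N₂ ≤ n → c₁ * (n:ℝ) ^ (q - δ/2) ≤ r n := by
    intro n hn
    have hnpos : (0:ℝ) < n := lt_of_lt_of_le hN₂pos (by exact_mod_cast hn)
    have h1 := (hPot₂ N₂ n le_rfl hn).1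
    rw [div_le_iff₀ (hr n)] at h1
    have hrp : ((N₂:ℝ)/n) ^ (q - δ/2) = (N₂:ℝ)^(q - δ/2) / (n:ℝ)^(q - δ/2) :=
      Real.div_rpow hN₂pos.le hnpos.le _
    rw [hrp] at h1
    have hNp : (0:ℝ) < (N₂:ℝ)^(q - δ/2) := Real.rpow_pos_of_pos hN₂pos _
    have hnp : (0:ℝ) < (n:ℝ)^(q - δ/2) := Real.rpow_pos_of_pos hnpos _
    calc c₁ * (n:ℝ)^(q - δ/2)
        = r N₂ * (Real.exp (-ecst) * ((N₂:ℝ)^(q - δ/2))⁻¹ * (n:ℝ)^(q - δ/2)) := by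
          rw [hc₁def]; ring
      _ ≤ (Real.exp ecst * ((N₂:ℝ)^(q - δ/2) / (n:ℝ)^(q - δ/2)) * r n)
            * (Real.exp (-ecst) * ((N₂:ℝ)^(q - δ/2))⁻¹ * (n:ℝ)^(q - δ/2)) := by
          apply mul_le_mul_of_nonneg_right h1 (by positivity)
      _ = r n := by
          rw [Real.exp_neg]
          field_simp
  -- bound for small indices
  set M : ℝ := ∑ k ∈ Finset.range (N₁+1), r k with hMdef
  have hM : ∀ j : ℕ, j ≤ N₁ → r j ≤ M := by
    intro j hj
    apply Finset.single_le_sum (f := fun k => r k) (fun k _ => (hr k).le)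
    rw [Finset.mem_range]; omega
  have hMpos : 0 < M := lt_of_lt_of_le (hr 0) (hM 0 (by omega))
  -- theta
  set θ : ℕ → ℝ := fun n => M * (n:ℝ)^(q - δ) / r n with hθdef
  have hθ0 : Tendsto θ atTop (nhds 0) := by
    have hub : Tendsto (fun n : ℕ => (M/c₁) * (n:ℝ)^(-(δ/2))) atTop (nhds 0) := by
      have h1 : Tendsto (fun n : ℕ => (n:ℝ)^(-(δ/2))) atTop (nhds 0) :=
        (tendsto_rpow_neg_atTop (by positivity)).comp tendsto_natCast_atTop_atTop
      have := h1.const_mul (M/c₁)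
      simpa using this
    apply tendsto_of_tendsto_of_tendsto_of_le_of_le' tendsto_const_nhds hub
    · filter_upwards with n
      exact div_nonneg (by positivity) (hr n).le
    · filter_upwards [eventually_ge_atTop N₂, eventually_ge_atTop 1] with n hn hn1
      have hnpos : (0:ℝ) < n := by exact_mod_cast (by omega : 0 < n)
      have hg := hgrow n hn
      have hnp2 : (0:ℝ) < (n:ℝ)^(q - δ/2) := Real.rpow_pos_of_pos hnpos _
      calc θ n ≤ M * (n:ℝ)^(q - δ) / (c₁ * (n:ℝ)^(q - δ/2)) := by
            apply div_le_div_of_nonneg_left (by positivity) (by positivity) hg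
        _ = (M/c₁) * ((n:ℝ)^(q - δ) / (n:ℝ)^(q - δ/2)) :=
            (div_mul_div_comm M c₁ ((n:ℝ)^(q - δ)) ((n:ℝ)^(q - δ/2))).symm.trans
              (by ring)
        _ = (M/c₁) * (n:ℝ)^(-(δ/2)) := by
            rw [← Real.rpow_sub hnpos, show (q - δ) - (q - δ/2) = -(δ/2) by ring]
  -- identity rewriting the goal
  have hgoalid : ∀ n : ℕ,
      s n * ∑ m ∈ Finset.Ico 1 n, P n m * (r (n - m) / r n - (1 - (m:ℝ)/n) ^ q)
        = (s n * ∑ m ∈ Finset.Ico 1 n, P n m * (r (n - m) / r n)) - A q n := by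
    intro n
    simp only [hAdef]
    rw [← mul_sub, ← Finset.sum_sub_distrib]
    congr 1
    apply Finset.sum_congr rfl
    intro m _
    ring
  -- fraction facts
  have hfrac : ∀ n m : ℕ, m ∈ Finset.Ico 1 n →
      (1 - (m:ℝ)/n) = ((n - m : ℕ):ℝ)/n ∧ (1:ℝ) ≤ ((n - m : ℕ):ℝ) ∧ (0:ℝ) < n := by
    intro n m hm
    rw [Finset.mem_Ico] at hm
    have hnpos : (0:ℝ) < n := by exact_mod_cast (by omega : 0 < n)
    have hcast : ((n - m : ℕ):ℝ) = (n:ℝ) - m := by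
      exact_mod_cast Nat.cast_sub (by omega : m ≤ n)
    refine ⟨?_, ?_, hnpos⟩
    · rw [hcast]; field_simp
    · exact_mod_cast (by omega : 1 ≤ n - m)
  -- upper bound for R n
  have hupper : ∀ n : ℕ,
      s n * ∑ m ∈ Finset.Ico 1 n, P n m * (r (n - m) / r n)
        ≤ (1 + ε₈) * A (q - δ) n + θ n * A (q - δ) n := by
    intro n
    have hterm : ∀ m ∈ Finset.Ico 1 n,
        P n m * (r (n - m) / r n) ≤
          P n m * ((1 + ε₈) * (1 - (m:ℝ)/n) ^ (q - δ))
            + P n m * ((M * (n:ℝ)^(q - δ) / r n) * (1 - (m:ℝ)/n) ^ (q - δ)) := by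
      intro m hm
      obtain ⟨hfr, hj1, hnpos⟩ := hfrac n m hm
      rw [Finset.mem_Ico] at hm
      have hfracpos : 0 < 1 - (m:ℝ)/n := by rw [hfr]; positivity
      have hXnn : (0:ℝ) ≤ (1 - (m:ℝ)/n) ^ (q - δ) := Real.rpow_nonneg hfracpos.le _
      have key : r (n - m) / r n ≤
          (1 + ε₈) * (1 - (m:ℝ)/n) ^ (q - δ)
            + (M * (n:ℝ)^(q - δ) / r n) * (1 - (m:ℝ)/n) ^ (q - δ) := by
        by_cases hcase : N₁ ≤ n - m
        · have h1 := (hPot₁ (n - m) n hcase (by omega)).1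
          rw [hexp] at h1
          have h3 : 0 ≤ (M * (n:ℝ)^(q - δ)/r n) * (1 - (m:ℝ)/n)^(q - δ) := by
            have := (hr n); positivity
          calc r (n - m)/r n ≤ (1 + ε₈) * (1 - (m:ℝ)/n)^(q - δ) := by rw [hfr]; exact h1
            _ ≤ _ := le_add_of_nonneg_right h3
        · push_neg at hcase
          have hrj : r (n - m) ≤ M := hM _ (by omega)
          have h1 : r (n - m)/r n ≤ M / r n := (div_le_div_iff_of_pos_right (hr n)).mpr hrj
          have h2 : (1:ℝ) ≤ (n:ℝ)^(q - δ) * (1 - (m:ℝ)/n)^(q - δ) := by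
            rw [hfr, ← Real.mul_rpow hnpos.le (by positivity)]
            have he : (n:ℝ) * (((n - m:ℕ):ℝ)/n) = ((n - m:ℕ):ℝ) := by field_simp
            rw [he]
            calc (1:ℝ) = (1:ℝ) ^ (q - δ) := (Real.one_rpow _).symm
              _ ≤ ((n - m:ℕ):ℝ) ^ (q - δ) :=
                  Real.rpow_le_rpow (by norm_num) hj1 (by linarith)
          have hMr : 0 ≤ M / r n := le_of_lt (div_pos hMpos (hr n))
          calc r (n - m)/r n ≤ M/r n := h1
            _ = (M/r n) * 1 := (mul_one _).symm
            _ ≤ (M/r n) * ((n:ℝ)^(q - δ) * (1 - (m:ℝ)/n)^(q - δ)) :=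
                mul_le_mul_of_nonneg_left h2 hMr
            _ = (M * (n:ℝ)^(q - δ)/r n) * (1 - (m:ℝ)/n)^(q - δ) := by ring
            _ ≤ _ := le_add_of_nonneg_left (by positivity)
      calc P n m * (r (n - m)/r n)
          ≤ P n m * ((1 + ε₈) * (1 - (m:ℝ)/n)^(q - δ)
              + (M * (n:ℝ)^(q - δ)/r n) * (1 - (m:ℝ)/n)^(q - δ)) :=
            mul_le_mul_of_nonneg_left key (hPnonneg n m)
        _ = _ := by ring
    have hsum := Finset.sum_le_sum hterm
    have e1 : ∑ m ∈ Finset.Ico 1 n, P n m * ((1 + ε₈) * (1 - (m:ℝ)/n)^(q - δ))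
        = (1 + ε₈) * ∑ m ∈ Finset.Ico 1 n, P n m * (1 - (m:ℝ)/n)^(q - δ) := by
      rw [Finset.mul_sum]; apply Finset.sum_congr rfl; intro m _; ring
    have e2 : ∑ m ∈ Finset.Ico 1 n, P n m * ((M * (n:ℝ)^(q - δ)/r n) * (1 - (m:ℝ)/n)^(q - δ))
        = (M * (n:ℝ)^(q - δ)/r n) * ∑ m ∈ Finset.Ico 1 n, P n m * (1 - (m:ℝ)/n)^(q - δ) := by
      rw [Finset.mul_sum]; apply Finset.sum_congr rfl; intro m _; ring
    calc s n * ∑ m ∈ Finset.Ico 1 n, P n m * (r (n - m) / r n)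
        ≤ s n * ∑ m ∈ Finset.Ico 1 n,
            (P n m * ((1 + ε₈) * (1 - (m:ℝ)/n)^(q - δ))
              + P n m * ((M * (n:ℝ)^(q - δ)/r n) * (1 - (m:ℝ)/n)^(q - δ))) :=
          mul_le_mul_of_nonneg_left hsum (hs n).le
      _ = (1 + ε₈) * A (q - δ) n + θ n * A (q - δ) n := by
          rw [Finset.sum_add_distrib, e1, e2]
          simp only [hAdef, hθdef]
          ring
  -- lower bound for R n
  have hlower : ∀ n : ℕ,
      Real.exp (-ecst) * A (q + δ) n - ((N₁:ℝ)^(q + δ) * (n:ℝ)^(-δ)) * A q n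
        ≤ s n * ∑ m ∈ Finset.Ico 1 n, P n m * (r (n - m) / r n) := by
    intro n
    have hterm : ∀ m ∈ Finset.Ico 1 n,
        P n m * (Real.exp (-ecst) * (1 - (m:ℝ)/n)^(q + δ))
          - P n m * (((N₁:ℝ)^(q + δ) * (n:ℝ)^(-δ)) * (1 - (m:ℝ)/n)^q)
          ≤ P n m * (r (n - m) / r n) := by
      intro m hm
      obtain ⟨hfr, hj1, hnpos⟩ := hfrac n m hm
      rw [Finset.mem_Ico] at hm
      have hfracpos : 0 < 1 - (m:ℝ)/n := by rw [hfr]; positivity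
      have key : Real.exp (-ecst) * (1 - (m:ℝ)/n)^(q + δ)
          - ((N₁:ℝ)^(q + δ) * (n:ℝ)^(-δ)) * (1 - (m:ℝ)/n)^q ≤ r (n - m)/r n := by
        by_cases hcase : N₁ ≤ n - m
        · have h1 := (hPot₁ (n - m) n hcase (by omega)).2
          rw [hfr]
          have h2 : 0 ≤ ((N₁:ℝ)^(q + δ) * (n:ℝ)^(-δ)) * (((n - m:ℕ):ℝ)/(n:ℝ))^q := by
            positivity
          linarith
        · push_neg at hcase
          have hN₁pos : (0:ℝ) < N₁ := by exact_mod_cast hN₁1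
          have hsub : Real.exp (-ecst) * (1 - (m:ℝ)/n)^(q + δ)
              ≤ ((N₁:ℝ)^(q + δ) * (n:ℝ)^(-δ)) * (1 - (m:ℝ)/n)^q := by
            have e1 : (1 - (m:ℝ)/n)^(q + δ) = (1 - (m:ℝ)/n)^q * (1 - (m:ℝ)/n)^δ :=
              Real.rpow_add hfracpos q δ
            have e2 : (1 - (m:ℝ)/n)^δ ≤ (N₁:ℝ)^δ * (n:ℝ)^(-δ) := by
              rw [hfr]
              calc (((n - m:ℕ):ℝ)/n)^δ ≤ ((N₁:ℝ)/n)^δ := by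
                    have hle : ((n - m:ℕ):ℝ) ≤ (N₁:ℝ) := by exact_mod_cast hcase.le
                    exact Real.rpow_le_rpow (by positivity) (by gcongr) hδpos.le
                _ = (N₁:ℝ)^δ * (n:ℝ)^(-δ) := by
                    rw [Real.div_rpow hN₁pos.le hnpos.le, Real.rpow_neg hnpos.le,
                      div_eq_mul_inv]
            have e3 : (N₁:ℝ)^δ ≤ (N₁:ℝ)^(q + δ) :=
              Real.rpow_le_rpow_of_exponent_le (by exact_mod_cast hN₁1) (by linarith)
            have hexple : Real.exp (-ecst) ≤ 1 := by
              rw [hexpneg]; exact inv_le_one_of_one_le₀ (by linarith)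
            have hq0 : (0:ℝ) ≤ (1 - (m:ℝ)/n)^q := Real.rpow_nonneg hfracpos.le q
            have hqd0 : (0:ℝ) ≤ (1 - (m:ℝ)/n)^(q + δ) := Real.rpow_nonneg hfracpos.le _
            calc Real.exp (-ecst) * (1 - (m:ℝ)/n)^(q + δ) ≤ (1 - (m:ℝ)/n)^(q + δ) := by
                  nlinarith [Real.exp_pos (-ecst)]
              _ = (1 - (m:ℝ)/n)^q * (1 - (m:ℝ)/n)^δ := e1
              _ ≤ (1 - (m:ℝ)/n)^q * ((N₁:ℝ)^δ * (n:ℝ)^(-δ)) :=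
                  mul_le_mul_of_nonneg_left e2 hq0
              _ ≤ (1 - (m:ℝ)/n)^q * ((N₁:ℝ)^(q + δ) * (n:ℝ)^(-δ)) := by
                  apply mul_le_mul_of_nonneg_left ?_ hq0
                  exact mul_le_mul_of_nonneg_right e3 (by positivity)
              _ = ((N₁:ℝ)^(q + δ) * (n:ℝ)^(-δ)) * (1 - (m:ℝ)/n)^q := by ring
          have hpos : 0 < r (n - m)/r n := div_pos (hr _) (hr _)
          linarith
      have hmul := mul_le_mul_of_nonneg_left key (hPnonneg n m)
      calc P n m * (Real.exp (-ecst) * (1 - (m:ℝ)/n)^(q + δ))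
            - P n m * (((N₁:ℝ)^(q + δ) * (n:ℝ)^(-δ)) * (1 - (m:ℝ)/n)^q)
          = P n m * (Real.exp (-ecst) * (1 - (m:ℝ)/n)^(q + δ)
              - ((N₁:ℝ)^(q + δ) * (n:ℝ)^(-δ)) * (1 - (m:ℝ)/n)^q) := by ring
        _ ≤ P n m * (r (n - m)/r n) := hmul
    have hsum := Finset.sum_le_sum hterm
    rw [Finset.sum_sub_distrib] at hsum
    have e1 : ∑ m ∈ Finset.Ico 1 n, P n m * (Real.exp (-ecst) * (1 - (m:ℝ)/n)^(q + δ))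
        = Real.exp (-ecst) * ∑ m ∈ Finset.Ico 1 n, P n m * (1 - (m:ℝ)/n)^(q + δ) := by
      rw [Finset.mul_sum]; apply Finset.sum_congr rfl; intro m _; ring
    have e2 : ∑ m ∈ Finset.Ico 1 n, P n m * (((N₁:ℝ)^(q + δ) * (n:ℝ)^(-δ)) * (1 - (m:ℝ)/n)^q)
        = ((N₁:ℝ)^(q + δ) * (n:ℝ)^(-δ)) * ∑ m ∈ Finset.Ico 1 n, P n m * (1 - (m:ℝ)/n)^q := by
      rw [Finset.mul_sum]; apply Finset.sum_congr rfl; intro m _; ring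
    rw [e1, e2] at hsum
    have := mul_le_mul_of_nonneg_left hsum (hs n).le
    calc Real.exp (-ecst) * A (q + δ) n - ((N₁:ℝ)^(q + δ) * (n:ℝ)^(-δ)) * A q n
        = s n * (Real.exp (-ecst) * ∑ m ∈ Finset.Ico 1 n, P n m * (1 - (m:ℝ)/n)^(q + δ)
            - ((N₁:ℝ)^(q + δ) * (n:ℝ)^(-δ)) * ∑ m ∈ Finset.Ico 1 n, P n m * (1 - (m:ℝ)/n)^q) := by
          simp only [hAdef]; ring
      _ ≤ s n * ∑ m ∈ Finset.Ico 1 n, P n m * (r (n - m)/r n) := this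
  -- limits of the bounding sequences
  have hUlim : Tendsto (fun n : ℕ => (1 + ε₈) * A (q - δ) n + θ n * A (q - δ) n) atTop
      (nhds ((1 + ε₈) * g (q - δ) + 0 * g (q - δ))) :=
    ((hAtend _ hmem1).const_mul _).add (hθ0.mul (hAtend _ hmem1))
  have hnδ0 : Tendsto (fun n : ℕ => (N₁:ℝ)^(q + δ) * (n:ℝ)^(-δ)) atTop (nhds 0) := by
    have h1 : Tendsto (fun n : ℕ => (n:ℝ)^(-δ)) atTop (nhds 0) :=
      (tendsto_rpow_neg_atTop hδpos).comp tendsto_natCast_atTop_atTop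
    simpa using h1.const_mul ((N₁:ℝ)^(q + δ))
  have hLlim : Tendsto (fun n : ℕ => Real.exp (-ecst) * A (q + δ) n
      - ((N₁:ℝ)^(q + δ) * (n:ℝ)^(-δ)) * A q n) atTop
      (nhds (Real.exp (-ecst) * g (q + δ) - 0 * g q)) :=
    ((hAtend _ hmem2).const_mul _).sub (hnδ0.mul (hAtend q ⟨hq₀q, hqb⟩))
  -- numeric bounds on limits
  have hgub : g (q - δ) ≤ g q + ε/8 := by
    have := abs_le.mp hgud.le; linarith [this.2]
  have hglb : g q - ε/8 ≤ g (q + δ) := by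
    have := abs_le.mp hgld.le; linarith [this.1]
  have hgqG : g q ≤ G := by rw [hGdef]; linarith
  have hε₈G : ε₈ * (G + 1) = ε/8 := by
    rw [hε₈def]; field_simp
  have hu : (1 + ε₈) * g (q - δ) + 0 * g (q - δ) < g q + ε/2 := by
    have h1 : g (q - δ) ≤ G + 1 := by
      have : ε/8 ≤ 1 := by linarith
      calc g (q - δ) ≤ g q + ε/8 := hgub
        _ ≤ G + 1 := by rw [hGdef]; linarith
    have h2 : ε₈ * g (q - δ) ≤ ε/8 := by
      calc ε₈ * g (q - δ) ≤ ε₈ * (G + 1) := mul_le_mul_of_nonneg_left h1 hε₈pos.le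
        _ = ε/8 := hε₈G
    nlinarith
  have hl : g q - ε/2 < Real.exp (-ecst) * g (q + δ) - 0 * g q := by
    have ha1 : Real.exp (-ecst) * (1 + ε₈) = 1 := by
      rw [hexpneg]; field_simp
    have hapos : 0 < Real.exp (-ecst) := Real.exp_pos _
    have hale : Real.exp (-ecst) ≤ 1 := by
      rw [hexpneg]; exact inv_le_one_of_one_le₀ (by linarith)
    have h1 : Real.exp (-ecst) * (g q - ε/8) ≤ Real.exp (-ecst) * g (q + δ) :=
      mul_le_mul_of_nonneg_left hglb hapos.le
    have h2 : (1 - Real.exp (-ecst)) * g q ≤ ε/8 := by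
      have hfa : 1 - Real.exp (-ecst) = ε₈ * Real.exp (-ecst) := by nlinarith
      rw [hfa]
      calc ε₈ * Real.exp (-ecst) * g q ≤ ε₈ * 1 * g q := by
            apply mul_le_mul_of_nonneg_right ?_ hgq0
            nlinarith
        _ = ε₈ * g q := by ring
        _ ≤ ε₈ * (G + 1) := by nlinarith
        _ = ε/8 := hε₈G
    nlinarith
  -- conclusion
  have hev1 := hUlim.eventually_lt_const hu
  have hev2 := hLlim.eventually_const_lt hl
  have hev3 := (hAtend q ⟨hq₀q, hqb⟩).eventually_lt_const
    (show g q < g q + ε/4 by linarith)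
  have hev4 := (hAtend q ⟨hq₀q, hqb⟩).eventually_const_lt
    (show g q - ε/4 < g q by linarith)
  filter_upwards [hev1, hev2, hev3, hev4] with n h1 h2 h3 h4
  rw [Real.norm_eq_abs, hgoalid n, abs_lt]
  have hup := hupper n
  have hlo := hlower n
  constructor
  · have : s n * ∑ m ∈ Finset.Ico 1 n, P n m * (r (n - m) / r n) < g q + ε/2 :=
      lt_of_le_of_lt hup h1
    linarith
  · have : g q - ε/2 < s n * ∑ m ∈ Finset.Ico 1 n, P n m * (r (n - m) / r n) :=
      lt_of_lt_of_le h2 hlo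
    linarith
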